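/- With the same notation, the coefficient of q^{n-4} in e_\delta(n) is 0 for all n \ge 4 (equivalently a_{n,1} = 0), and the leading coefficient (of q^{n-3}) is 1 (equivalently a_{n,0} = 1). -/

import Mathlib

open Finset

/-- `e(m) = ∏_{j=2}^{m-2} (q - j)`, the Poincaré polynomial of `M_{0,m}`. -/
noncomputable def eOpen (m : ℕ) : Polynomial ℚ :=
  ∏ j ∈ Finset.Icc 2 (m - 2), (Polynomial.X - (j : Polynomial ℚ))

/-- `P(λ) = (n-2+∑ᵢ λᵢ)! / ((n-1)! ∏ᵢ λᵢ!)` for a partition `λ ⊢ n-2`. -/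
noncomputable def Pcoeff (n : ℕ) (lam : Nat.Partition (n - 2)) : ℚ :=
  ((n - 2 + lam.parts.card).factorial : ℚ) /
    (((n - 1).factorial : ℚ) * ∏ i ∈ Finset.Icc 1 (n - 2), ((lam.parts.count i).factorial : ℚ))

/-- `e_δ(n) = ∑_{λ ⊢ n-2} P(λ) ∏ᵢ e(i+2)^{λᵢ}`. -/
noncomputable def eDelta (n : ℕ) : Polynomial ℚ :=
  ∑ lam : Nat.Partition (n - 2),
    Pcoeff n lam • ∏ i ∈ Finset.Icc 1 (n - 2), (eOpen (i + 2)) ^ (lam.parts.count i)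

open Polynomial

lemma eOpen_eq (m : ℕ) : eOpen m = ∏ j ∈ Finset.Icc 2 (m - 2), (X - C (j : ℚ)) := by
  simp [eOpen]

lemma eOpen_monic (m : ℕ) : (eOpen m).Monic := by
  rw [eOpen_eq]; exact monic_prod_of_monic _ _ fun j _ => monic_X_sub_C _

lemma eOpen_natDegree (m : ℕ) : (eOpen m).natDegree = m - 3 := by
  rw [eOpen_eq, natDegree_prod _ _ fun j _ => X_sub_C_ne_zero _]
  simp only [natDegree_X_sub_C, Finset.sum_const, smul_eq_mul, mul_one, Nat.card_Icc]
  omega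

lemma eOpen_coeff_sub4 (m : ℕ) (hm : 4 ≤ m) :
    (eOpen m).coeff (m - 4) = -(∑ j ∈ Finset.Icc 2 (m - 2), (j : ℚ)) := by
  have h1 : (eOpen m).nextCoeff = -(∑ j ∈ Finset.Icc 2 (m - 2), (j : ℚ)) := by
    rw [eOpen_eq]; exact prod_X_sub_C_nextCoeff _
  rw [nextCoeff_of_natDegree_pos (by rw [eOpen_natDegree]; omega)] at h1
  rw [eOpen_natDegree] at h1
  have h2 : m - 3 - 1 = m - 4 := by omega
  rwa [h2] at h1

noncomputable def Tprod (n : ℕ) (lam : Nat.Partition (n - 2)) : Polynomial ℚ :=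
  ∏ i ∈ Finset.Icc 1 (n - 2), (eOpen (i + 2)) ^ (lam.parts.count i)

lemma parts_mem_Icc {n : ℕ} (lam : Nat.Partition (n - 2)) :
    ∀ a ∈ lam.parts, a ∈ Finset.Icc 1 (n - 2) := by
  intro a ha
  have h1 := lam.parts_pos ha
  have h2 : a ≤ lam.parts.sum := by
    rw [← Multiset.cons_erase ha, Multiset.sum_cons]
    exact Nat.le_add_right _ _
  rw [lam.parts_sum] at h2
  simp only [Finset.mem_Icc]
  omega

lemma parts_toFinset_subset {n : ℕ} (lam : Nat.Partition (n - 2)) :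
    lam.parts.toFinset ⊆ Finset.Icc 1 (n - 2) := fun a ha =>
  parts_mem_Icc lam a (Multiset.mem_toFinset.mp ha)

lemma sum_count_eq_card' {n : ℕ} (lam : Nat.Partition (n - 2)) :
    ∑ i ∈ Finset.Icc 1 (n - 2), lam.parts.count i = lam.parts.card :=
  Multiset.sum_count_eq_card (parts_mem_Icc lam)

lemma sum_count_mul {n : ℕ} (lam : Nat.Partition (n - 2)) :
    ∑ i ∈ Finset.Icc 1 (n - 2), lam.parts.count i * i = n - 2 := by
  have h := Finset.sum_multiset_count_of_subset lam.parts _ (parts_toFinset_subset lam)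
  rw [lam.parts_sum] at h
  simp only [smul_eq_mul] at h
  omega

lemma Tprod_monic {n : ℕ} (lam : Nat.Partition (n - 2)) : (Tprod n lam).Monic :=
  monic_prod_of_monic _ _ fun i _ => (eOpen_monic _).pow _

lemma Tprod_natDegree {n : ℕ} (lam : Nat.Partition (n - 2)) :
    (Tprod n lam).natDegree = (n - 2) - lam.parts.card := by
  rw [Tprod, natDegree_prod _ _ fun i _ => ((eOpen_monic _).pow _).ne_zero]
  have h1 : ∀ i ∈ Finset.Icc 1 (n - 2),
      ((eOpen (i + 2)) ^ (lam.parts.count i)).natDegree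
        = lam.parts.count i * i - lam.parts.count i := by
    intro i hi
    rw [natDegree_pow, eOpen_natDegree]
    simp only [Finset.mem_Icc] at hi
    have : i + 2 - 3 = i - 1 := by omega
    rw [this, Nat.mul_sub, mul_one]
  rw [Finset.sum_congr rfl h1, Finset.sum_tsub_distrib, sum_count_eq_card', sum_count_mul]
  intro i hi
  simp only [Finset.mem_Icc] at hi
  exact Nat.le_mul_of_pos_right _ (by omega)

/-- the one-part partition `{n-2}` -/
noncomputable def lamOne (n : ℕ) : Nat.Partition (n - 2) :=
  Nat.Partition.ofSums (n - 2) {n - 2} (by simp)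

lemma lamOne_parts {n : ℕ} (hn : 4 ≤ n) : (lamOne n).parts = {n - 2} := by
  rw [lamOne, Nat.Partition.ofSums_parts]
  rw [Multiset.filter_eq_self]
  intro a ha
  simp only [Multiset.mem_singleton] at ha
  subst ha
  omega

lemma eq_lamOne_of_card_eq_one {n : ℕ} (hn : 4 ≤ n) (lam : Nat.Partition (n - 2))
    (h : lam.parts.card = 1) : lam = lamOne n := by
  obtain ⟨a, ha⟩ := Multiset.card_eq_one.mp h
  have hs := lam.parts_sum
  rw [ha, Multiset.sum_singleton] at hs
  ext1
  rw [ha, lamOne_parts hn, hs]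

lemma card_pos' {n : ℕ} (hn : 4 ≤ n) (lam : Nat.Partition (n - 2)) : 0 < lam.parts.card := by
  rw [Multiset.card_pos]
  intro h
  have := lam.parts_sum
  rw [h] at this
  simp at this
  omega

lemma Tprod_lamOne {n : ℕ} (hn : 4 ≤ n) : Tprod n (lamOne n) = eOpen n := by
  rw [Tprod]
  have hn2 : n - 2 + 2 = n := by omega
  rw [Finset.prod_eq_single (n - 2)]
  · rw [lamOne_parts hn]
    simp [Multiset.count_singleton, hn2]
  · intro i hi hne
    rw [lamOne_parts hn]
    simp only [Multiset.count_singleton, if_neg hne, pow_zero]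
  · intro h
    exact absurd (Finset.mem_Icc.mpr ⟨by omega, le_refl _⟩) h

lemma Pcoeff_lamOne {n : ℕ} (hn : 4 ≤ n) : Pcoeff n (lamOne n) = 1 := by
  have hcard : (lamOne n).parts.card = 1 := by rw [lamOne_parts hn]; simp
  have hprod : ∏ i ∈ Finset.Icc 1 (n - 2), (((lamOne n).parts.count i).factorial : ℚ) = 1 := by
    apply Finset.prod_eq_one
    intro i _
    rw [lamOne_parts hn, Multiset.count_singleton]
    split_ifs <;> simp
  rw [Pcoeff, hcard, hprod, mul_one]
  have h1 : n - 2 + 1 = n - 1 := by omega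
  rw [h1, div_self]
  exact_mod_cast Nat.factorial_ne_zero _

lemma Pcoeff_pair {n : ℕ} (hn : 4 ≤ n) (lam : Nat.Partition (n - 2)) (a c : ℕ)
    (hp : lam.parts = {a, c}) :
    Pcoeff n lam = if a = c then (n : ℚ) / 2 else (n : ℚ) := by
  have hmem : a ∈ Finset.Icc 1 (n - 2) := parts_mem_Icc lam a (by rw [hp]; simp)
  have hmemc : c ∈ Finset.Icc 1 (n - 2) := parts_mem_Icc lam c (by rw [hp]; simp)
  have hcard : lam.parts.card = 2 := by rw [hp]; exact Multiset.card_pair a c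
  have hsub : ({a, c} : Finset ℕ) ⊆ Finset.Icc 1 (n - 2) := by
    intro x hx
    simp only [Finset.mem_insert, Finset.mem_singleton] at hx
    rcases hx with rfl | rfl <;> assumption
  have hprod : ∏ i ∈ Finset.Icc 1 (n - 2), ((lam.parts.count i).factorial : ℚ)
      = if a = c then 2 else 1 := by
    rw [← Finset.prod_subset hsub (fun x _ hx => by
      have : lam.parts.count x = 0 := by
        rw [Multiset.count_eq_zero, hp]
        simp only [Finset.mem_insert, Finset.mem_singleton, not_or] at hx
        simp only [Multiset.insert_eq_cons, Multiset.mem_cons, Multiset.mem_singleton]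
        tauto
      rw [this]; simp)]
    by_cases hac : a = c
    · subst hac
      rw [if_pos rfl]
      have : ({a, a} : Finset ℕ) = {a} := by simp
      rw [this, Finset.prod_singleton, hp]
      have : ({a, a} : Multiset ℕ).count a = 2 := by
        simp [Multiset.insert_eq_cons, Multiset.count_cons, Multiset.count_singleton]
      rw [this]
      norm_num [Nat.factorial]
    · rw [if_neg hac, Finset.prod_pair hac, hp]
      have h1 : ({a, c} : Multiset ℕ).count a = 1 := by
        simp [Multiset.insert_eq_cons, Multiset.count_cons, Multiset.count_singleton, hac]
      have h2 : ({a, c} : Multiset ℕ).count c = 1 := by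
        simp [Multiset.insert_eq_cons, Multiset.count_cons, Multiset.count_singleton,
          Ne.symm hac]
      rw [h1, h2]
      simp
  rw [Pcoeff, hcard, hprod]
  have h1 : n - 2 + 2 = n := by omega
  have h2 : (n.factorial : ℚ) = n * (n - 1).factorial := by
    conv_lhs => rw [show n = (n - 1) + 1 from by omega, Nat.factorial_succ]
    push_cast [Nat.cast_sub (show 1 ≤ n by omega)]
    ring
  have h4 : ((n - 1).factorial : ℚ) ≠ 0 := by exact_mod_cast Nat.factorial_ne_zero _
  rw [h1, h2]
  split_ifs
  · field_simp
  · field_simp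

lemma pair_eq_pair' {a b c d : ℕ} :
    ({a, b} : Multiset ℕ) = {c, d} ↔ (a = c ∧ b = d) ∨ (a = d ∧ b = c) := by
  constructor
  · intro h
    rw [Multiset.insert_eq_cons, Multiset.insert_eq_cons, Multiset.cons_eq_cons] at h
    rcases h with ⟨h1, h2⟩ | ⟨h1, cs, h2, h3⟩
    · exact Or.inl ⟨h1, by simpa using h2⟩
    · rw [Multiset.singleton_eq_cons_iff] at h2 h3
      exact Or.inr ⟨h3.1.symm, h2.1⟩
  · rintro (⟨rfl, rfl⟩ | ⟨rfl, rfl⟩)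
    · rfl
    · exact Multiset.pair_comm _ _

noncomputable def phi (n b : ℕ) : Nat.Partition (n - 2) :=
  if h : b ≤ n - 2 then
    Nat.Partition.ofSums (n - 2) {b, n - 2 - b}
      (by simp only [Multiset.insert_eq_cons, Multiset.sum_cons, Multiset.sum_singleton]; omega)
  else Nat.Partition.ofSums (n - 2) {n - 2} (by simp)

lemma phi_parts {n b : ℕ} (hn : 4 ≤ n) (hb : b ∈ Finset.Icc 1 (n - 3)) :
    (phi n b).parts = {b, n - 2 - b} := by
  simp only [Finset.mem_Icc] at hb
  rw [phi, dif_pos (by omega), Nat.Partition.ofSums_parts, Multiset.filter_eq_self]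
  intro x hx
  simp only [Multiset.insert_eq_cons, Multiset.mem_cons, Multiset.mem_singleton] at hx
  rcases hx with rfl | rfl <;> omega

lemma phi_card {n b : ℕ} (hn : 4 ≤ n) (hb : b ∈ Finset.Icc 1 (n - 3)) :
    (phi n b).parts.card = 2 := by
  rw [phi_parts hn hb]; exact Multiset.card_pair _ _

lemma phi_fiber {n : ℕ} (hn : 4 ≤ n) (lam : Nat.Partition (n - 2)) (a c : ℕ)
    (hp : lam.parts = {a, c}) :
    (Finset.Icc 1 (n - 3)).filter (fun b => phi n b = lam)
      = if a = c then ({a} : Finset ℕ) else {a, c} := by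
  have hmem : a ∈ Finset.Icc 1 (n - 2) := parts_mem_Icc lam a (by rw [hp]; simp)
  have hmemc : c ∈ Finset.Icc 1 (n - 2) := parts_mem_Icc lam c (by rw [hp]; simp)
  simp only [Finset.mem_Icc] at hmem hmemc
  have hsum : a + c = n - 2 := by
    have := lam.parts_sum
    rw [hp] at this
    simpa [Multiset.insert_eq_cons] using this
  ext b
  constructor
  · intro hbmem
    rw [Finset.mem_filter] at hbmem
    obtain ⟨hb, heq⟩ := hbmem
    have hparts : ({b, n - 2 - b} : Multiset ℕ) = {a, c} := by
      rw [← phi_parts hn hb, heq, hp]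
    rw [pair_eq_pair'] at hparts
    split_ifs with hac
    · subst hac
      rcases hparts with ⟨rfl, _⟩ | ⟨rfl, _⟩ <;> simp
    · rcases hparts with ⟨rfl, _⟩ | ⟨rfl, _⟩ <;> simp
  · intro hbmem
    have hbval : b = a ∨ b = c := by
      split_ifs at hbmem with hac
      · subst hac; simp at hbmem; tauto
      · simp at hbmem; tauto
    have hb : b ∈ Finset.Icc 1 (n - 3) := by
      simp only [Finset.mem_Icc]
      rcases hbval with rfl | rfl <;> omega
    rw [Finset.mem_filter]
    refine ⟨hb, ?_⟩
    ext1
    rw [phi_parts hn hb, hp]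
    rcases hbval with rfl | rfl
    · have : n - 2 - b = c := by omega
      rw [this]
    · have : n - 2 - b = a := by omega
      rw [this]
      exact Multiset.pair_comm _ _

lemma card_le_sub {n : ℕ} (lam : Nat.Partition (n - 2)) : lam.parts.card ≤ n - 2 := by
  conv_lhs => rw [← sum_count_eq_card' lam]
  conv_rhs => rw [← sum_count_mul lam]
  apply Finset.sum_le_sum
  intro i hi
  simp only [Finset.mem_Icc] at hi
  exact Nat.le_mul_of_pos_right _ (by omega)

lemma sum_P_two {n : ℕ} (hn : 4 ≤ n) :
    ∑ lam ∈ Finset.univ.filter (fun lam : Nat.Partition (n - 2) => lam.parts.card = 2),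
      Pcoeff n lam = ((n - 3 : ℕ) : ℚ) * ((n : ℚ) / 2) := by
  have hmaps : ∀ b ∈ Finset.Icc 1 (n - 3), phi n b ∈
      Finset.univ.filter (fun lam : Nat.Partition (n - 2) => lam.parts.card = 2) := by
    intro b hb
    exact Finset.mem_filter.mpr ⟨Finset.mem_univ _, phi_card hn hb⟩
  have hfib := Finset.sum_fiberwise_of_maps_to hmaps (fun _ => (n : ℚ) / 2)
  rw [Finset.sum_const, Nat.card_Icc] at hfib
  have hcard : n - 3 + 1 - 1 = n - 3 := by omega
  rw [hcard, nsmul_eq_mul] at hfib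
  rw [← hfib]
  apply Finset.sum_congr rfl
  intro lam hlam
  obtain ⟨-, hcard2⟩ := Finset.mem_filter.mp hlam
  obtain ⟨a, c, hp⟩ := Multiset.card_eq_two.mp hcard2
  rw [phi_fiber hn lam a c hp, Pcoeff_pair hn lam a c hp]
  split_ifs with hac
  · rw [Finset.sum_singleton]
  · rw [Finset.sum_pair hac]
    ring

lemma sum_Icc_two {n : ℕ} (hn : 4 ≤ n) :
    2 * ∑ j ∈ Finset.Icc 2 (n - 2), (j : ℚ) = ((n - 3 : ℕ) : ℚ) * (n : ℚ) := by
  have hrefl : ∑ j ∈ Finset.Icc 2 (n - 2), (j : ℚ)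
      = ∑ j ∈ Finset.Icc 2 (n - 2), ((n - j : ℕ) : ℚ) := by
    apply Finset.sum_nbij' (i := fun j => n - j) (j := fun j => n - j)
    · intro x hx; simp only [Finset.mem_Icc] at *; omega
    · intro x hx; simp only [Finset.mem_Icc] at *; omega
    · intro x hx; simp only [Finset.mem_Icc] at hx; omega
    · intro x hx; simp only [Finset.mem_Icc] at hx; omega
    · intro x hx
      simp only [Finset.mem_Icc] at hx
      have : n - (n - x) = x := by omega
      rw [this]
  have h2 : 2 * ∑ j ∈ Finset.Icc 2 (n - 2), (j : ℚ)
      = ∑ j ∈ Finset.Icc 2 (n - 2), ((j : ℚ) + ((n - j : ℕ) : ℚ)) := by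
    rw [Finset.sum_add_distrib, ← hrefl]; ring
  rw [h2]
  have h3 : ∀ j ∈ Finset.Icc 2 (n - 2), (j : ℚ) + ((n - j : ℕ) : ℚ) = (n : ℚ) := by
    intro j hj
    simp only [Finset.mem_Icc] at hj
    rw [Nat.cast_sub (by omega)]
    ring
  rw [Finset.sum_congr rfl h3, Finset.sum_const, Nat.card_Icc, nsmul_eq_mul]
  congr 2

lemma eDelta_coeff (n : ℕ) (d : ℕ) :
    (eDelta n).coeff d = ∑ lam : Nat.Partition (n - 2), Pcoeff n lam * (Tprod n lam).coeff d := by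
  rw [eDelta, Polynomial.finset_sum_coeff]
  apply Finset.sum_congr rfl
  intro lam _
  rw [Polynomial.coeff_smul, smul_eq_mul, Tprod]

theorem betti_zero_one (n : ℕ) (hn : 4 ≤ n) :
    (eDelta n).coeff (n - 4) = 0 ∧ (eDelta n).coeff (n - 3) = 1 := by
  constructor
  · rw [eDelta_coeff]
    rw [← Finset.sum_filter_add_sum_filter_not Finset.univ
      (fun lam : Nat.Partition (n - 2) => lam.parts.card = 1)]
    have hone : Finset.univ.filter (fun lam : Nat.Partition (n - 2) => lam.parts.card = 1)
        = {lamOne n} := by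
      ext lam
      simp only [Finset.mem_filter, Finset.mem_univ, true_and, Finset.mem_singleton]
      constructor
      · exact eq_lamOne_of_card_eq_one hn lam
      · rintro rfl
        rw [lamOne_parts hn]; simp
    have htwo : ∑ lam ∈ Finset.univ.filter
          (fun lam : Nat.Partition (n - 2) => ¬lam.parts.card = 1),
          Pcoeff n lam * (Tprod n lam).coeff (n - 4)
        = ∑ lam ∈ Finset.univ.filter
          (fun lam : Nat.Partition (n - 2) => lam.parts.card = 2),
          Pcoeff n lam * (Tprod n lam).coeff (n - 4) := by
      symm
      apply Finset.sum_subset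
      · intro lam hlam
        simp only [Finset.mem_filter, Finset.mem_univ, true_and] at *
        omega
      · intro lam hlam hnot
        simp only [Finset.mem_filter, Finset.mem_univ, true_and] at hlam hnot
        have hc1 := card_pos' hn lam
        have hc2 := card_le_sub lam
        have hdeg : (Tprod n lam).natDegree < n - 4 := by
          rw [Tprod_natDegree]; omega
        rw [Polynomial.coeff_eq_zero_of_natDegree_lt hdeg, mul_zero]
    rw [hone, htwo, Finset.sum_singleton]
    have hterm2 : ∑ lam ∈ Finset.univ.filter
          (fun lam : Nat.Partition (n - 2) => lam.parts.card = 2),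
          Pcoeff n lam * (Tprod n lam).coeff (n - 4)
        = ((n - 3 : ℕ) : ℚ) * ((n : ℚ) / 2) := by
      rw [← sum_P_two hn]
      apply Finset.sum_congr rfl
      intro lam hlam
      obtain ⟨-, hcard2⟩ := Finset.mem_filter.mp hlam
      have hdeg : (Tprod n lam).natDegree = n - 4 := by
        rw [Tprod_natDegree, hcard2]; omega
      have := (Tprod_monic lam).coeff_natDegree
      rw [hdeg] at this
      rw [this, mul_one]
    rw [hterm2, Pcoeff_lamOne hn, Tprod_lamOne hn, one_mul, eOpen_coeff_sub4 n hn]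
    have := sum_Icc_two hn
    linarith
  · rw [eDelta_coeff]
    rw [Finset.sum_eq_single_of_mem (lamOne n) (Finset.mem_univ _)]
    · rw [Pcoeff_lamOne hn, Tprod_lamOne hn, one_mul]
      have := (eOpen_monic n).coeff_natDegree
      rwa [eOpen_natDegree] at this
    · intro lam _ hne
      have hcard : lam.parts.card ≠ 1 := fun h => hne (eq_lamOne_of_card_eq_one hn lam h)
      have hc1 := card_pos' hn lam
      have hc2 := card_le_sub lam
      have hdeg : (Tprod n lam).natDegree < n - 3 := by
        rw [Tprod_natDegree]; omega
      rw [Polynomial.coeff_eq_zero_of_natDegree_lt hdeg, mul_zero]
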